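/- arXiv:1110.1322 — 2 statements merged into one kernel-verified Lean document; each statement's English description precedes it below -/
import Mathlib

section
/- Let D be a (v,k,λ)-difference set in ℤ/vℤ, let w be a positive divisor of v with w < v, and let x_i = #{d ∈ D : d ≡ i (mod w)}. Then ∑_{i=0}^{w-1} x_i² = (k - λ) + λv/w. -/
def IsDiffSet (v k l : ℕ) (D : Finset (ZMod v)) : Prop :=
  D.card = k ∧ ∀ d : ZMod v, d ≠ 0 →
    ((D ×ˢ D).filter (fun p => p.1 - p.2 = d)).card = l

theorem residue_classes_sum_sq (v k l w : ℕ) (hw : 0 < w) (hwv : w ∣ v) (hwlt : w < v)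
    (D : Finset (ZMod v)) (hD : IsDiffSet v k l D) :
    ∑ i ∈ Finset.range w, ((D.filter (fun d => d.val % w = i)).card : ℤ) ^ 2
      = ((k : ℤ) - l) + (l : ℤ) * v / w := by
  haveI : NeZero v := ⟨by omega⟩
  haveI : NeZero w := ⟨hw.ne'⟩
  haveI : Fact (1 < v) := ⟨by omega⟩
  have hvalv : ∀ a : ZMod v, a.val < v := fun a => ZMod.val_lt a
  -- congruence mod w of vals vs difference
  have key : ∀ a b : ZMod v, a.val % w = b.val % w ↔ (a - b).val % w = 0 := by
    intro a b
    set f : ZMod v →+* ZMod w := ZMod.castHom hwv (ZMod w) with hf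
    have hfval : ∀ a : ZMod v, (f a).val = a.val % w := by
      intro a
      rw [hf, ZMod.castHom_apply, ← ZMod.natCast_val, ZMod.val_natCast]
    have hvi : ∀ x y : ZMod w, x.val = y.val ↔ x = y :=
      fun x y => ⟨fun h => ZMod.val_injective w h, fun h => by rw [h]⟩
    have h0 : (0 : ZMod w).val = 0 := ZMod.val_zero
    rw [← hfval, ← hfval, ← hfval, hvi, ← h0, hvi, map_sub, sub_eq_zero]
  -- the set of differences ≡ 0 mod w
  set T : Finset (ZMod v) := Finset.univ.filter (fun d => d.val % w = 0) with hT
  have hmullt : ∀ i < v / w, i * w < v := by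
    intro i hi
    calc i * w < (v / w) * w := (Nat.mul_lt_mul_right hw).mpr hi
    _ = v := Nat.div_mul_cancel hwv
  have hTcard : T.card = v / w := by
    rw [hT, ← Finset.card_range (v / w)]
    apply Finset.card_nbij' (fun d => d.val / w) (fun i => ((i * w : ℕ) : ZMod v))
    · intro d hd
      exact Finset.mem_range.mpr (Nat.div_lt_div_of_lt_of_dvd hwv (hvalv d))
    · intro i hi
      simp only [Finset.mem_coe, Finset.mem_range] at hi
      simp only [Finset.mem_coe, Finset.mem_filter, Finset.mem_univ, true_and]
      rw [ZMod.val_natCast_of_lt (hmullt i hi)]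
      simp [Nat.mul_mod_left]
    · intro d hd
      simp only [Finset.mem_coe, Finset.mem_filter, Finset.mem_univ, true_and] at hd
      have hdvd : w ∣ d.val := Nat.dvd_of_mod_eq_zero hd
      beta_reduce
      rw [Nat.div_mul_cancel hdvd, ZMod.natCast_val, ZMod.cast_id]
    · intro i hi
      simp only [Finset.mem_coe, Finset.mem_range] at hi
      beta_reduce
      rw [ZMod.val_natCast_of_lt (hmullt i hi), Nat.mul_div_cancel _ hw]
  -- main counting, in ℕ
  have hsum : ∑ i ∈ Finset.range w, (D.filter (fun d => d.val % w = i)).card ^ 2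
      = k + l * (v / w - 1) := by
    have step1 : ∀ i, (D.filter (fun d => d.val % w = i)).card ^ 2
        = (((D ×ˢ D).filter (fun p => p.1.val % w = p.2.val % w)).filter
            (fun p => p.1.val % w = i)).card := by
      intro i
      rw [sq, ← Finset.card_product]
      congr 1
      ext p
      simp only [Finset.mem_product, Finset.mem_filter]
      constructor
      · rintro ⟨⟨h1, h2⟩, h3, h4⟩
        exact ⟨⟨⟨h1, h3⟩, by omega⟩, h2⟩
      · rintro ⟨⟨⟨h1, h3⟩, h2⟩, h4⟩
        exact ⟨⟨h1, by omega⟩, h3, by omega⟩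
    rw [Finset.sum_congr rfl (fun i _ => step1 i)]
    rw [← Finset.card_eq_sum_card_fiberwise
      (f := fun p : ZMod v × ZMod v => p.1.val % w)
      (s := (D ×ˢ D).filter (fun p => p.1.val % w = p.2.val % w))
      (t := Finset.range w)
      (by intro x _; exact Finset.mem_range.mpr (Nat.mod_lt _ hw))]
    -- rewrite the filter condition via key
    have hre : (D ×ˢ D).filter (fun p => p.1.val % w = p.2.val % w)
        = (D ×ˢ D).filter (fun p => (p.1 - p.2).val % w = 0) := by
      apply Finset.filter_congr
      intro p _
      simpa using key p.1 p.2
    rw [hre]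
    -- fiber decomposition over differences
    rw [Finset.card_eq_sum_card_fiberwise (f := fun p : ZMod v × ZMod v => p.1 - p.2)
      (t := T) (by
        intro p hp
        simp only [Finset.mem_coe, Finset.mem_filter] at hp
        simp [hT, hp.2])]
    have hfib : ∀ d ∈ T, (((D ×ˢ D).filter (fun p => (p.1 - p.2).val % w = 0)).filter
        (fun p => p.1 - p.2 = d)).card = ((D ×ˢ D).filter (fun p => p.1 - p.2 = d)).card := by
      intro d hd
      simp only [hT, Finset.mem_filter, Finset.mem_univ, true_and] at hd
      congr 1
      ext p
      simp only [Finset.mem_filter]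
      constructor
      · rintro ⟨⟨h1, _⟩, h3⟩; exact ⟨h1, h3⟩
      · rintro ⟨h1, h3⟩; exact ⟨⟨h1, by rw [h3]; exact hd⟩, h3⟩
    rw [Finset.sum_congr rfl hfib]
    have h0T : (0 : ZMod v) ∈ T := by simp [hT]
    rw [← Finset.add_sum_erase _ _ h0T]
    have hdiag : ((D ×ˢ D).filter (fun p => p.1 - p.2 = (0 : ZMod v))).card = k := by
      have himg : (D ×ˢ D).filter (fun p => p.1 - p.2 = (0 : ZMod v))
          = D.image (fun d => (d, d)) := by
        ext p
        simp only [Finset.mem_filter, Finset.mem_product, Finset.mem_image, sub_eq_zero]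
        constructor
        · rintro ⟨⟨h1, h2⟩, h3⟩
          exact ⟨p.1, h1, Prod.ext rfl h3⟩
        · rintro ⟨a, ha, rfl⟩
          exact ⟨⟨ha, ha⟩, rfl⟩
      rw [himg, Finset.card_image_of_injective _ (fun a b h => by
        simpa using congrArg Prod.fst h), hD.1]
    rw [hdiag]
    have hrest : ∀ d ∈ T.erase 0, ((D ×ˢ D).filter (fun p => p.1 - p.2 = d)).card = l := by
      intro d hd
      exact hD.2 d (Finset.mem_erase.mp hd).1
    rw [Finset.sum_congr rfl hrest, Finset.sum_const, smul_eq_mul,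
      Finset.card_erase_of_mem h0T, hTcard, Nat.mul_comm]
  -- l ≤ k
  have hlk : l ≤ k := by
    have hd0 : (1 : ZMod v) ≠ 0 := one_ne_zero
    rw [← hD.2 _ hd0, ← hD.1]
    set s := (D ×ˢ D).filter (fun p => p.1 - p.2 = (1 : ZMod v)) with hs
    have hinj : Set.InjOn Prod.snd (s : Set (ZMod v × ZMod v)) := by
      intro p hp q hq h
      simp only [hs, Finset.coe_filter, Set.mem_setOf_eq] at hp hq
      have h1 := hp.2
      rw [h] at h1
      have h2 := h1.trans hq.2.symm
      exact Prod.ext (sub_left_injective h2) h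
    rw [← Finset.card_image_of_injOn hinj]
    apply Finset.card_le_card
    intro x hx
    simp only [Finset.mem_image] at hx
    obtain ⟨p, hp, rfl⟩ := hx
    simp only [hs, Finset.mem_filter, Finset.mem_product] at hp
    exact hp.1.2
  -- final arithmetic
  have hcast : (∑ i ∈ Finset.range w, ((D.filter (fun d => d.val % w = i)).card : ℤ) ^ 2)
      = ((k + l * (v / w - 1) : ℕ) : ℤ) := by
    rw [← hsum]; push_cast; rfl
  have h1 : 1 ≤ v / w := (Nat.one_le_div_iff hw).mpr (le_of_lt hwlt)
  have e2 : (l : ℤ) * v / w = (l : ℤ) * ((v / w : ℕ) : ℤ) := by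
    rw [Int.mul_ediv_assoc _ (Int.natCast_dvd_natCast.mpr hwv), Int.natCast_ediv]
  rw [hcast, e2]
  push_cast [Nat.cast_sub h1]
  ring
end

section
/- If a circulant matrix H of order n with entries ±1 satisfies H·Hᵀ = n·I and n > 1, then n ≡ 0 (mod 4). -/
open Matrix

theorem circulant_hadamard_order_div_four (n : ℕ) [NeZero n] (hn : 1 < n) (a : ZMod n → ℤ)
    (ha : ∀ i, a i = 1 ∨ a i = -1)
    (hH : Matrix.circulant a * (Matrix.circulant a)ᵀ
        = (n : ℤ) • (1 : Matrix (ZMod n) (ZMod n) ℤ)) :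
    n % 4 = 0 := by
  classical
  -- entrywise version of hH
  have entry : ∀ i j : ZMod n,
      (∑ k : ZMod n, a (i - k) * a (j - k)) = if i = j then (n : ℤ) else 0 := by
    intro i j
    have := congrFun (congrFun hH i) j
    simp only [Matrix.mul_apply, Matrix.circulant_apply, Matrix.transpose_apply,
      Matrix.smul_apply, Matrix.one_apply, smul_eq_mul] at this
    rw [this]
    split <;> simp
  -- n is even
  have h1 : (1 : ZMod n) ≠ 0 := by
    intro h
    have h' : ((1 : ℕ) : ZMod n) = 0 := by simpa using h
    rw [ZMod.natCast_eq_zero_iff] at h'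
    exact absurd (Nat.le_of_dvd one_pos h') (by omega)
  have he := entry 1 0
  rw [if_neg h1] at he
  have hn2 : (2 : ℕ) ∣ n := by
    have c2 : (∑ k : ZMod n, (((a (1 - k) * a (0 - k) : ℤ)) : ZMod 2)) = 0 := by
      have := congrArg (fun z : ℤ => (z : ZMod 2)) he
      push_cast at this
      convert this using 2 <;> push_cast <;> ring
    have cterm : ∀ k : ZMod n, (((a (1 - k) * a (0 - k) : ℤ)) : ZMod 2) = 1 := by
      intro k
      rcases ha (1 - k) with h | h <;> rcases ha (0 - k) with h' | h' <;>
        rw [h, h'] <;> decide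
    rw [Finset.sum_congr rfl (fun k _ => cterm k)] at c2
    simp only [Finset.sum_const, Finset.card_univ, ZMod.card, nsmul_eq_mul, mul_one] at c2
    rwa [ZMod.natCast_eq_zero_iff] at c2
  -- row sum squared equals n
  set S : ℤ := ∑ i : ZMod n, a i with hS
  have hsum : ∀ k : ZMod n, (∑ d : ZMod n, a (d - k)) = S := by
    intro k
    exact Fintype.sum_equiv (Equiv.subRight k) _ _ (fun d => rfl)
  have hS2 : S * S = (n : ℤ) := by
    have lhs : (∑ d : ZMod n, ∑ k : ZMod n, a (d - k) * a (0 - k)) = S * S := by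
      rw [Finset.sum_comm]
      calc (∑ k : ZMod n, ∑ d : ZMod n, a (d - k) * a (0 - k))
          = ∑ k : ZMod n, a (0 - k) * S := by
            refine Finset.sum_congr rfl fun k _ => ?_
            rw [← Finset.sum_mul, hsum k, mul_comm]
        _ = S * S := by
            rw [← Finset.sum_mul]
            congr 1
            simpa using Fintype.sum_equiv (Equiv.neg (ZMod n)) (fun k => a (0 - k)) a
              (fun k => by simp)
    have rhs : (∑ d : ZMod n, ∑ k : ZMod n, a (d - k) * a (0 - k)) = (n : ℤ) := by
      rw [Finset.sum_congr rfl (fun d _ => entry d 0)]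
      simp
    rw [← lhs, rhs]
  -- S is even, hence 4 ∣ n
  have hSeven : Even S := by
    by_contra hodd
    rw [Int.not_even_iff_odd] at hodd
    have : Odd (S * S) := hodd.mul hodd
    rw [hS2] at this
    rcases hn2 with ⟨m, rfl⟩
    exact (Int.not_odd_iff_even.symm.mp (by exact_mod_cast even_two_mul m)) this
  rcases hSeven with ⟨t, ht⟩
  have : (4 : ℤ) ∣ (n : ℤ) := by
    rw [← hS2, ht]
    ring_nf
    exact ⟨t * t, by ring⟩
  have h4 : (4 : ℕ) ∣ n := by exact_mod_cast this
  omega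
end
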